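/- Let T > 0, p > 0, ρ > 0, C⋆ > 0, and let 0 < η < p with η ≤ 2; set γ⋆ := η/(2p + η(ρ−2)) (the denominator is positive). Suppose that for every h ∈ (0,1] there are jointly measurable processes v₁ʰ, v₂ʰ on [0,T] with almost surely continuous paths, eʰ := v₁ʰ − v₂ʰ, and a random time τ_h : Ω → [0,T] such that {τ_h < T} ⊆ {sup_{t∈[0,T]}|v₁ʰ(t)| ≥ h^{−γ⋆}} ∪ {sup_{t∈[0,T]}|v₂ʰ(t)| ≥ h^{−γ⋆}}, E[sup_{t∈[0,T]}|vᵢʰ(t)|^p] ≤ C⋆ for i = 1,2, and E[sup_{t∈[0,τ_h]}|eʰ(t)|²] ≤ h^{1−ργ⋆}. Then there is a constant C, depending only on p, η, ρ and C⋆, such that (E[sup_{t∈[0,T]}|eʰ(t)|^η])^{1/η} ≤ C·h^{(1/2)·(p−η)/(p−η+ηρ/2)} for all h ∈ (0,1]. -/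

import Mathlib

open MeasureTheory Set

open Filter
open scoped ENNReal

private lemma ratProj_mem {σ : ℝ} (h0 : 0 ≤ σ) (q : ℚ) :
    max 0 (min σ (q : ℝ)) ∈ Icc (0:ℝ) σ :=
  ⟨le_max_left _ _, max_le h0 (min_le_left _ _)⟩

private lemma ratSup_eq {T σ : ℝ} (hσ : σ ∈ Icc (0:ℝ) T) (f : ℝ → ℝ)
    (hf : ContinuousOn f (Icc 0 T)) :
    (⨆ t : Icc (0:ℝ) σ, |f t.1|) = ⨆ q : ℚ, |f (max 0 (min σ (q:ℝ)))| := by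
  obtain ⟨hσ0, hσT⟩ := hσ
  have hsub : Icc (0:ℝ) σ ⊆ Icc 0 T := Icc_subset_Icc le_rfl hσT
  have hfc : ContinuousOn (fun t => |f t|) (Icc 0 T) := hf.abs
  obtain ⟨M, hM⟩ := (isCompact_Icc.image_of_continuousOn hfc).bddAbove
  have hMb : ∀ x ∈ Icc (0:ℝ) T, |f x| ≤ M := fun x hx => hM ⟨x, hx, rfl⟩
  have hbddI : BddAbove (range fun t : Icc (0:ℝ) σ => |f t.1|) :=
    ⟨M, by rintro _ ⟨t, rfl⟩; exact hMb _ (hsub t.2)⟩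
  have hbddQ : BddAbove (range fun q : ℚ => |f (max 0 (min σ (q:ℝ)))|) :=
    ⟨M, by rintro _ ⟨q, rfl⟩; exact hMb _ (hsub (ratProj_mem hσ0 q))⟩
  haveI : Nonempty (Icc (0:ℝ) σ) := ⟨⟨0, le_rfl, hσ0⟩⟩
  apply le_antisymm
  · refine ciSup_le fun t => ?_
    have hq : ∀ n : ℕ, ∃ q : ℚ, t.1 < q ∧ (q : ℝ) < t.1 + 1/(n+1) := by
      intro n
      exact exists_rat_btwn (lt_add_of_pos_right t.1 (by positivity))
    choose q hq1 hq2 using hq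
    have hqt : Tendsto (fun n => (q n : ℝ)) atTop (nhds t.1) := by
      have h1 : Tendsto (fun n : ℕ => t.1 + 1/(n+1)) atTop (nhds t.1) := by
        have : Tendsto (fun n : ℕ => 1 / ((n : ℝ) + 1)) atTop (nhds 0) :=
          tendsto_one_div_add_atTop_nhds_zero_nat
        simpa using (tendsto_const_nhds (x := t.1)).add this
      exact tendsto_of_tendsto_of_tendsto_of_le_of_le tendsto_const_nhds h1
        (fun n => (hq1 n).le) (fun n => (hq2 n).le)
    have hproj : Tendsto (fun n => max 0 (min σ (q n : ℝ))) atTop (nhds t.1) := by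
      have hcontproj : Continuous (fun x : ℝ => max 0 (min σ x)) :=
        continuous_const.max (continuous_const.min continuous_id)
      have := (hcontproj.tendsto t.1).comp hqt
      simpa [Function.comp_def, min_eq_right t.2.2, max_eq_right t.2.1] using this
    have hmem : ∀ n, max 0 (min σ (q n : ℝ)) ∈ Icc (0:ℝ) T :=
      fun n => hsub (ratProj_mem hσ0 (q n))
    have hprojW : Tendsto (fun n => max 0 (min σ (q n : ℝ))) atTop
        (nhdsWithin t.1 (Icc (0:ℝ) T)) :=
      tendsto_nhdsWithin_iff.2 ⟨hproj, Eventually.of_forall hmem⟩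
    have hft : Tendsto (fun n => |f (max 0 (min σ (q n : ℝ)))|) atTop (nhds (|f t.1|)) :=
      (hfc.continuousWithinAt (hsub t.2)).tendsto.comp hprojW
    exact le_of_tendsto hft (Eventually.of_forall fun n => le_ciSup hbddQ (q n))
  · exact ciSup_le fun qq => le_ciSup_of_le hbddI ⟨_, ratProj_mem hσ0 qq⟩ le_rfl

private lemma ofReal_rpow_ratSup {f : ℚ → ℝ} (hf0 : ∀ q, 0 ≤ f q)
    (hbdd : BddAbove (range f)) {r : ℝ} (hr : 0 ≤ r) :
    ENNReal.ofReal ((⨆ q, f q) ^ r) = ⨆ q, ENNReal.ofReal (f q ^ r) := by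
  have hmono : Monotone (fun x : ℝ => ENNReal.ofReal x ^ r) :=
    fun x y hxy => ENNReal.rpow_le_rpow (ENNReal.ofReal_le_ofReal hxy) hr
  have hcont : ContinuousAt (fun x : ℝ => ENNReal.ofReal x ^ r) (⨆ q, f q) :=
    (ENNReal.continuous_rpow_const.comp ENNReal.continuous_ofReal).continuousAt
  calc ENNReal.ofReal ((⨆ q, f q) ^ r)
      = ENNReal.ofReal (⨆ q, f q) ^ r :=
        (ENNReal.ofReal_rpow_of_nonneg (Real.iSup_nonneg hf0) hr).symm
    _ = ⨆ q, ENNReal.ofReal (f q) ^ r := hmono.map_ciSup_of_continuousAt hcont hbdd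
    _ = ⨆ q, ENNReal.ofReal (f q ^ r) :=
        iSup_congr fun q => ENNReal.ofReal_rpow_of_nonneg (hf0 q) hr

private lemma ofReal_sup_rpow_eq {T σ : ℝ} (hσ : σ ∈ Icc (0:ℝ) T) (f : ℝ → ℝ)
    (hf : ContinuousOn f (Icc 0 T)) {r : ℝ} (hr : 0 ≤ r) :
    ENNReal.ofReal ((⨆ t : Icc (0:ℝ) σ, |f t.1|) ^ r)
      = ⨆ q : ℚ, ENNReal.ofReal (|f (max 0 (min σ (q:ℝ)))| ^ r) := by
  rw [ratSup_eq hσ f hf]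
  refine ofReal_rpow_ratSup (fun q => abs_nonneg _) ?_ hr
  obtain ⟨M, hM⟩ := (isCompact_Icc.image_of_continuousOn hf.abs).bddAbove
  refine ⟨M, ?_⟩
  rintro _ ⟨q, rfl⟩
  exact hM ⟨_, Icc_subset_Icc le_rfl hσ.2 (ratProj_mem hσ.1 q), rfl⟩

private lemma aemeasurable_ofReal_sup_rpow {Ω : Type*} [MeasurableSpace Ω] (μ : Measure Ω)
    {T : ℝ} (w : ℝ → Ω → ℝ) (hw : Measurable (Function.uncurry w))
    (σ : Ω → ℝ) (hσ : Measurable σ) (hmem : ∀ ω, σ ω ∈ Icc (0:ℝ) T)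
    (hcont : ∀ᵐ ω ∂μ, ContinuousOn (fun t => w t ω) (Icc 0 T)) {r : ℝ} (hr : 0 ≤ r) :
    AEMeasurable (fun ω => ENNReal.ofReal ((⨆ t : Icc (0:ℝ) (σ ω), |w t.1 ω|) ^ r)) μ := by
  refine ⟨fun ω => ⨆ q : ℚ, ENNReal.ofReal (|w (max 0 (min (σ ω) (q:ℝ))) ω| ^ r), ?_, ?_⟩
  · refine Measurable.iSup fun q => ?_
    have hwm : Measurable fun ω => w (max 0 (min (σ ω) (q:ℝ))) ω :=
      hw.comp ((measurable_const.max (hσ.min measurable_const)).prodMk measurable_id)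
    exact (hwm.abs.pow measurable_const).ennreal_ofReal
  · filter_upwards [hcont] with ω hω
    exact ofReal_sup_rpow_eq (hmem ω) _ hω hr

private lemma lintegral_rpow_le_rpow_lintegral {Ω : Type*} [MeasurableSpace Ω]
    (μ : Measure Ω) [IsProbabilityMeasure μ] {f : Ω → ℝ≥0∞} (hf : AEMeasurable f μ)
    {s : ℝ} (hs : 0 < s) (hs1 : s ≤ 1) :
    ∫⁻ ω, f ω ^ s ∂μ ≤ (∫⁻ ω, f ω ∂μ) ^ s := by
  rcases eq_or_lt_of_le hs1 with h1 | h1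
  · simp [h1]
  · have hpq : Real.HolderConjugate (1/s) (1/(1-s)) := by
      constructor
      · rw [one_div, one_div, inv_inv, inv_inv, inv_one]; ring
      · positivity
      · have : 0 < 1 - s := by linarith
        positivity
    have hF : AEMeasurable (fun ω => f ω ^ s) μ := hf.pow aemeasurable_const
    have hG : AEMeasurable (fun _ : Ω => (1:ℝ≥0∞)) μ := aemeasurable_const
    have H := ENNReal.lintegral_mul_le_Lp_mul_Lq μ hpq hF hG
    simp only [Pi.mul_apply, mul_one, ENNReal.one_rpow, lintegral_one, measure_univ,
      one_div_one_div] at H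
    calc ∫⁻ ω, f ω ^ s ∂μ ≤ (∫⁻ ω, (f ω ^ s) ^ (1/s) ∂μ) ^ s * 1 ^ (1-s) := by
          simpa using H
      _ = (∫⁻ ω, f ω ∂μ) ^ s := by
          rw [ENNReal.one_rpow, mul_one]
          congr 1
          refine lintegral_congr fun ω => ?_
          rw [← ENNReal.rpow_mul, mul_one_div_cancel hs.ne', ENNReal.rpow_one]
open scoped ENNReal

/-- Corollary `cor:rate`: with the optimal stopping level `γ⋆ = η/(2p + η(ρ-2))` and localized
error bound `h^(1-ργ⋆)`, the uniform strong error in `L^η` is of order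
`h^((1/2)·(p-η)/(p-η+ηρ/2))`, with a constant depending only on `p`, `η`, `ρ` and `C⋆`. -/
theorem enkf_rate_corollary
    {Ω : Type*} [MeasurableSpace Ω] (μ : Measure Ω) [IsProbabilityMeasure μ]
    (p η ρ Cs : ℝ) (hp : 0 < p) (hρ : 0 < ρ) (hCs : 0 < Cs)
    (hη0 : 0 < η) (hηp : η < p) (hη2 : η ≤ 2) :
    ∃ C > 0, ∀ T : ℝ, 0 < T →
      ∀ h ∈ Ioc (0:ℝ) 1, ∀ (v₁ v₂ : ℝ → Ω → ℝ) (τ : Ω → ℝ),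
      Measurable (Function.uncurry v₁) → Measurable (Function.uncurry v₂) →
      (∀ᵐ ω ∂μ, ContinuousOn (fun t => v₁ t ω) (Icc 0 T)) →
      (∀ᵐ ω ∂μ, ContinuousOn (fun t => v₂ t ω) (Icc 0 T)) →
      Measurable τ → (∀ ω, τ ω ∈ Icc (0:ℝ) T) →
      ({ω | τ ω < T} ⊆
        {ω | h ^ (-(η / (2 * p + η * (ρ - 2)))) ≤ ⨆ t : Icc (0:ℝ) T, |v₁ t.1 ω|}
          ∪ {ω | h ^ (-(η / (2 * p + η * (ρ - 2)))) ≤ ⨆ t : Icc (0:ℝ) T, |v₂ t.1 ω|}) →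
      (∫⁻ ω, ENNReal.ofReal ((⨆ t : Icc (0:ℝ) T, |v₁ t.1 ω|) ^ p) ∂μ ≤ ENNReal.ofReal Cs) →
      (∫⁻ ω, ENNReal.ofReal ((⨆ t : Icc (0:ℝ) T, |v₂ t.1 ω|) ^ p) ∂μ ≤ ENNReal.ofReal Cs) →
      (∫⁻ ω, ENNReal.ofReal ((⨆ t : Icc (0:ℝ) (τ ω), |v₁ t.1 ω - v₂ t.1 ω|) ^ 2) ∂μ
          ≤ ENNReal.ofReal (h ^ (1 - ρ * (η / (2 * p + η * (ρ - 2)))))) →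
      (∫⁻ ω, ENNReal.ofReal ((⨆ t : Icc (0:ℝ) T, |v₁ t.1 ω - v₂ t.1 ω|) ^ η) ∂μ) ^ (1/η)
        ≤ ENNReal.ofReal (C * h ^ ((1/2) * (p - η) / (p - η + η * ρ / 2))) := by
  have hD : 0 < 2 * p + η * (ρ - 2) := by nlinarith
  set α : ℝ := (p - η) / (2 * p + η * (ρ - 2)) with hαdef
  have hα0 : 0 < α := div_pos (by linarith) hD
  set K : ℝ := 1 + 2 ^ (η + 1) * Cs with hKdef
  have hK0 : 0 < K := by positivity
  refine ⟨K ^ (1/η), Real.rpow_pos_of_pos hK0 _, ?_⟩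
  intro T hT h hh v₁ v₂ τ hm1 hm2 hc1 hc2 hmτ hτmem hsubset hI1 hI2 hIe
  have hh0 : 0 < h := hh.1
  have hT0 : (0:ℝ) ≤ T := hT.le
  haveI : Nonempty (Icc (0:ℝ) T) := ⟨⟨0, le_rfl, hT0⟩⟩
  have hden : (0:ℝ) < p - η + η * ρ / 2 := by nlinarith
  have hgoalexp : (1/2) * (p - η) / (p - η + η * ρ / 2) = α := by
    rw [hαdef, div_eq_div_iff hden.ne' hD.ne']
    ring
  have hexp2 : (1 - ρ * (η / (2 * p + η * (ρ - 2)))) * (η / 2) = η * α := by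
    rw [hαdef]
    field_simp
    ring
  have hexp3 : η * α * (1 / η) = α := by
    field_simp
  set c : ℝ := 2 ^ η * h ^ (η * α) with hcdef
  have hc0 : 0 ≤ c := by positivity
  -- pointwise a.e. inequality
  have hpt : ∀ᵐ ω ∂μ, ENNReal.ofReal ((⨆ t : Icc (0:ℝ) T, |v₁ t.1 ω - v₂ t.1 ω|) ^ η)
      ≤ ENNReal.ofReal ((⨆ t : Icc (0:ℝ) (τ ω), |v₁ t.1 ω - v₂ t.1 ω|) ^ η)
        + ENNReal.ofReal c * (ENNReal.ofReal ((⨆ t : Icc (0:ℝ) T, |v₁ t.1 ω|) ^ p)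
          + ENNReal.ofReal ((⨆ t : Icc (0:ℝ) T, |v₂ t.1 ω|) ^ p)) := by
    filter_upwards [hc1, hc2] with ω h1ω h2ω
    set S₁ := ⨆ t : Icc (0:ℝ) T, |v₁ t.1 ω| with hS₁def
    set S₂ := ⨆ t : Icc (0:ℝ) T, |v₂ t.1 ω| with hS₂def
    set E := ⨆ t : Icc (0:ℝ) T, |v₁ t.1 ω - v₂ t.1 ω| with hEdef
    set Y := ⨆ t : Icc (0:ℝ) (τ ω), |v₁ t.1 ω - v₂ t.1 ω| with hYdef
    have hS₁0 : 0 ≤ S₁ := Real.iSup_nonneg fun _ => abs_nonneg _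
    have hS₂0 : 0 ≤ S₂ := Real.iSup_nonneg fun _ => abs_nonneg _
    have hE0 : 0 ≤ E := Real.iSup_nonneg fun _ => abs_nonneg _
    have hY0 : 0 ≤ Y := Real.iSup_nonneg fun _ => abs_nonneg _
    have hrest0 : 0 ≤ c * (S₁ ^ p + S₂ ^ p) :=
      mul_nonneg hc0 (add_nonneg (Real.rpow_nonneg hS₁0 p) (Real.rpow_nonneg hS₂0 p))
    have key : E ^ η ≤ Y ^ η + c * (S₁ ^ p + S₂ ^ p) := by
      by_cases hτT : τ ω < T
      · have hB₁ : BddAbove (range fun t : Icc (0:ℝ) T => |v₁ t.1 ω|) := by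
          obtain ⟨b, hb⟩ := (isCompact_Icc.image_of_continuousOn h1ω.abs).bddAbove
          refine ⟨b, ?_⟩
          rintro _ ⟨t, rfl⟩
          exact hb ⟨t.1, t.2, rfl⟩
        have hB₂ : BddAbove (range fun t : Icc (0:ℝ) T => |v₂ t.1 ω|) := by
          obtain ⟨b, hb⟩ := (isCompact_Icc.image_of_continuousOn h2ω.abs).bddAbove
          refine ⟨b, ?_⟩
          rintro _ ⟨t, rfl⟩
          exact hb ⟨t.1, t.2, rfl⟩
        have hM : h ^ (-(η / (2 * p + η * (ρ - 2)))) ≤ max S₁ S₂ := by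
          rcases hsubset hτT with hω | hω
          · exact le_max_of_le_left hω
          · exact le_max_of_le_right hω
        set M := max S₁ S₂ with hMdef
        have hMpos : 0 < M := lt_of_lt_of_le (Real.rpow_pos_of_pos hh0 _) hM
        have hpη : (0:ℝ) ≤ p - η := by linarith
        have h1 : h ^ (-(η / (2 * p + η * (ρ - 2))) * (p - η)) ≤ M ^ (p - η) := by
          rw [Real.rpow_mul hh0.le]
          exact Real.rpow_le_rpow (Real.rpow_pos_of_pos hh0 _).le hM hpη
        have h2 : (1:ℝ) ≤ h ^ (η * α) * M ^ (p - η) := by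
          have hprod : h ^ (η * α) * h ^ (-(η / (2 * p + η * (ρ - 2))) * (p - η)) = 1 := by
            rw [← Real.rpow_add hh0]
            have : η * α + -(η / (2 * p + η * (ρ - 2))) * (p - η) = 0 := by
              rw [hαdef]; field_simp; ring
            rw [this, Real.rpow_zero]
          calc (1:ℝ) = h ^ (η * α) * h ^ (-(η / (2 * p + η * (ρ - 2))) * (p - η)) := hprod.symm
            _ ≤ h ^ (η * α) * M ^ (p - η) :=
                mul_le_mul_of_nonneg_left h1 (Real.rpow_nonneg hh0.le _)
        have hEle : E ≤ S₁ + S₂ := by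
          refine ciSup_le fun t => ?_
          calc |v₁ t.1 ω - v₂ t.1 ω| ≤ |v₁ t.1 ω| + |v₂ t.1 ω| := abs_sub _ _
            _ ≤ S₁ + S₂ := add_le_add (le_ciSup hB₁ t) (le_ciSup hB₂ t)
        have hMS : M ^ p ≤ S₁ ^ p + S₂ ^ p := by
          rcases max_choice S₁ S₂ with hM' | hM'
          · rw [hMdef, hM']
            exact le_add_of_nonneg_right (Real.rpow_nonneg hS₂0 p)
          · rw [hMdef, hM']
            exact le_add_of_nonneg_left (Real.rpow_nonneg hS₁0 p)
        have hchain : E ^ η ≤ c * (S₁ ^ p + S₂ ^ p) := by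
          calc E ^ η ≤ (S₁ + S₂) ^ η := Real.rpow_le_rpow hE0 hEle hη0.le
            _ ≤ (2 * M) ^ η := by
                refine Real.rpow_le_rpow (by linarith) ?_ hη0.le
                rw [two_mul]
                exact add_le_add (le_max_left _ _) (le_max_right _ _)
            _ = 2 ^ η * M ^ η := Real.mul_rpow (by norm_num) hMpos.le
            _ = 2 ^ η * (M ^ η * 1) := by ring
            _ ≤ 2 ^ η * (M ^ η * (h ^ (η * α) * M ^ (p - η))) := by
                refine mul_le_mul_of_nonneg_left ?_ (by positivity)
                exact mul_le_mul_of_nonneg_left h2 (Real.rpow_nonneg hMpos.le _)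
            _ = 2 ^ η * h ^ (η * α) * (M ^ η * M ^ (p - η)) := by ring
            _ = c * M ^ p := by
                rw [hcdef, ← Real.rpow_add hMpos]
                ring_nf
            _ ≤ c * (S₁ ^ p + S₂ ^ p) := mul_le_mul_of_nonneg_left hMS hc0
        exact le_trans hchain (le_add_of_nonneg_left (Real.rpow_nonneg hY0 η))
      · have hτT' : τ ω = T := le_antisymm (hτmem ω).2 (not_lt.1 hτT)
        have hYE : Y = E := by rw [hYdef, hEdef, hτT']
        rw [hYE]
        exact le_add_of_nonneg_right hrest0
    calc ENNReal.ofReal (E ^ η) ≤ ENNReal.ofReal (Y ^ η + c * (S₁ ^ p + S₂ ^ p)) :=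
          ENNReal.ofReal_le_ofReal key
      _ = ENNReal.ofReal (Y ^ η) + ENNReal.ofReal c
            * (ENNReal.ofReal (S₁ ^ p) + ENNReal.ofReal (S₂ ^ p)) := by
          rw [ENNReal.ofReal_add (Real.rpow_nonneg hY0 η) hrest0, ENNReal.ofReal_mul hc0,
            ENNReal.ofReal_add (Real.rpow_nonneg hS₁0 p) (Real.rpow_nonneg hS₂0 p)]
  -- measurability
  have hsub_meas : Measurable (Function.uncurry fun t ω => v₁ t ω - v₂ t ω) := hm1.sub hm2
  have hcontE : ∀ᵐ ω ∂μ, ContinuousOn (fun t => v₁ t ω - v₂ t ω) (Icc 0 T) := by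
    filter_upwards [hc1, hc2] with ω a b using a.sub b
  have hG₁ : AEMeasurable (fun ω => ENNReal.ofReal ((⨆ t : Icc (0:ℝ) T, |v₁ t.1 ω|) ^ p)) μ :=
    aemeasurable_ofReal_sup_rpow μ v₁ hm1 (fun _ => T) measurable_const
      (fun _ => ⟨hT0, le_rfl⟩) hc1 hp.le
  have hG₂ : AEMeasurable (fun ω => ENNReal.ofReal ((⨆ t : Icc (0:ℝ) T, |v₂ t.1 ω|) ^ p)) μ :=
    aemeasurable_ofReal_sup_rpow μ v₂ hm2 (fun _ => T) measurable_const
      (fun _ => ⟨hT0, le_rfl⟩) hc2 hp.le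
  have hGY2 : AEMeasurable (fun ω =>
      ENNReal.ofReal ((⨆ t : Icc (0:ℝ) (τ ω), |v₁ t.1 ω - v₂ t.1 ω|) ^ (2:ℕ))) μ := by
    have := aemeasurable_ofReal_sup_rpow μ (fun t ω => v₁ t ω - v₂ t ω) hsub_meas τ hmτ
      hτmem hcontE (r := 2) (by norm_num)
    simpa [Real.rpow_two] using this
  -- Jensen step
  have hJ : ∫⁻ ω, ENNReal.ofReal ((⨆ t : Icc (0:ℝ) (τ ω), |v₁ t.1 ω - v₂ t.1 ω|) ^ η) ∂μ
      ≤ ENNReal.ofReal (h ^ (η * α)) := by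
    have heq : ∀ ω, ENNReal.ofReal ((⨆ t : Icc (0:ℝ) (τ ω), |v₁ t.1 ω - v₂ t.1 ω|) ^ η)
        = (ENNReal.ofReal ((⨆ t : Icc (0:ℝ) (τ ω), |v₁ t.1 ω - v₂ t.1 ω|) ^ 2)) ^ (η/2) := by
      intro ω
      set Y := ⨆ t : Icc (0:ℝ) (τ ω), |v₁ t.1 ω - v₂ t.1 ω| with hYdef
      have hY0 : 0 ≤ Y := Real.iSup_nonneg fun _ => abs_nonneg _
      rw [ENNReal.ofReal_rpow_of_nonneg (by positivity) (by positivity)]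
      congr 1
      rw [← Real.rpow_two, ← Real.rpow_mul hY0]
      ring_nf
    calc ∫⁻ ω, ENNReal.ofReal ((⨆ t : Icc (0:ℝ) (τ ω), |v₁ t.1 ω - v₂ t.1 ω|) ^ η) ∂μ
        = ∫⁻ ω, (ENNReal.ofReal
            ((⨆ t : Icc (0:ℝ) (τ ω), |v₁ t.1 ω - v₂ t.1 ω|) ^ 2)) ^ (η/2) ∂μ :=
          lintegral_congr heq
      _ ≤ (∫⁻ ω, ENNReal.ofReal
            ((⨆ t : Icc (0:ℝ) (τ ω), |v₁ t.1 ω - v₂ t.1 ω|) ^ 2) ∂μ) ^ (η/2) :=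
          lintegral_rpow_le_rpow_lintegral μ hGY2 (by positivity) (by linarith)
      _ ≤ (ENNReal.ofReal (h ^ (1 - ρ * (η / (2 * p + η * (ρ - 2)))))) ^ (η/2) :=
          ENNReal.rpow_le_rpow hIe (by positivity)
      _ = ENNReal.ofReal (h ^ (η * α)) := by
          rw [ENNReal.ofReal_rpow_of_nonneg (Real.rpow_nonneg hh0.le _) (by positivity),
            ← Real.rpow_mul hh0.le, hexp2]
  -- main estimate
  have hmain : ∫⁻ ω, ENNReal.ofReal ((⨆ t : Icc (0:ℝ) T, |v₁ t.1 ω - v₂ t.1 ω|) ^ η) ∂μ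
      ≤ ENNReal.ofReal (K * h ^ (η * α)) := by
    calc ∫⁻ ω, ENNReal.ofReal ((⨆ t : Icc (0:ℝ) T, |v₁ t.1 ω - v₂ t.1 ω|) ^ η) ∂μ
        ≤ ∫⁻ ω, (ENNReal.ofReal ((⨆ t : Icc (0:ℝ) (τ ω), |v₁ t.1 ω - v₂ t.1 ω|) ^ η)
            + ENNReal.ofReal c * (ENNReal.ofReal ((⨆ t : Icc (0:ℝ) T, |v₁ t.1 ω|) ^ p)
              + ENNReal.ofReal ((⨆ t : Icc (0:ℝ) T, |v₂ t.1 ω|) ^ p))) ∂μ :=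
          lintegral_mono_ae hpt
      _ = (∫⁻ ω, ENNReal.ofReal ((⨆ t : Icc (0:ℝ) (τ ω), |v₁ t.1 ω - v₂ t.1 ω|) ^ η) ∂μ)
            + ∫⁻ ω, ENNReal.ofReal c * (ENNReal.ofReal ((⨆ t : Icc (0:ℝ) T, |v₁ t.1 ω|) ^ p)
              + ENNReal.ofReal ((⨆ t : Icc (0:ℝ) T, |v₂ t.1 ω|) ^ p)) ∂μ :=
          lintegral_add_right' _ ((hG₁.add hG₂).const_mul _)
      _ = (∫⁻ ω, ENNReal.ofReal ((⨆ t : Icc (0:ℝ) (τ ω), |v₁ t.1 ω - v₂ t.1 ω|) ^ η) ∂μ)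
            + ENNReal.ofReal c
              * ((∫⁻ ω, ENNReal.ofReal ((⨆ t : Icc (0:ℝ) T, |v₁ t.1 ω|) ^ p) ∂μ)
                + ∫⁻ ω, ENNReal.ofReal ((⨆ t : Icc (0:ℝ) T, |v₂ t.1 ω|) ^ p) ∂μ) := by
          rw [lintegral_const_mul' _ _ ENNReal.ofReal_ne_top, lintegral_add_left' hG₁]
      _ ≤ ENNReal.ofReal (h ^ (η * α))
            + ENNReal.ofReal c * (ENNReal.ofReal Cs + ENNReal.ofReal Cs) :=
          add_le_add hJ (mul_le_mul_right (add_le_add hI1 hI2) _)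
      _ = ENNReal.ofReal (K * h ^ (η * α)) := by
          rw [← ENNReal.ofReal_add hCs.le hCs.le, ← ENNReal.ofReal_mul hc0,
            ← ENNReal.ofReal_add (Real.rpow_nonneg hh0.le _)
              (mul_nonneg hc0 (by linarith))]
          congr 1
          have h2pow : (2:ℝ) ^ (η + 1) = 2 ^ η * 2 := by
            rw [Real.rpow_add (by norm_num : (0:ℝ) < 2), Real.rpow_one]
          rw [hcdef, hKdef, h2pow]
          ring
  -- conclude
  refine le_trans (ENNReal.rpow_le_rpow hmain (by positivity)) (le_of_eq ?_)
  rw [hgoalexp]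
  rw [ENNReal.ofReal_rpow_of_nonneg (mul_nonneg hK0.le (Real.rpow_nonneg hh0.le _))
    (by positivity), Real.mul_rpow hK0.le (Real.rpow_nonneg hh0.le _),
    ← Real.rpow_mul hh0.le, hexp3]
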